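/- arXiv:2212.14642 — 3 statements merged into one kernel-verified Lean document; each statement's English description precedes it below -/
import Mathlib

section
/- Let A, B, C be groups with injective homomorphisms α: C → A and β: C → B, and form the amalgamated free product A *_C B. If the natural homomorphism A → A *_C B is surjective, then β: C → B is surjective. -/
/-- if in the amalgamated free product `A *_C B` (with `A = G true`,
`B = G false`, amalgamated over `C` along injective homomorphisms `φ`), the natural
homomorphism from `A` is surjective, then `β = φ false : C → B` is surjective. -/
theorem stmt0 {C : Type} [Group C] {G : Bool → Type} [∀ i, Group (G i)]
    (φ : ∀ i, C →* G i)
    (hα : Function.Injective (φ true)) (hβ : Function.Injective (φ false))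
    (hsurj : Function.Surjective (Monoid.PushoutI.of (φ := φ) true)) :
    Function.Surjective (φ false) := by
  have hφ : ∀ i, Function.Injective (φ i) := by
    intro i; cases i <;> assumption
  intro b
  have hmem : Monoid.PushoutI.of (φ := φ) false b ∈
      (Monoid.PushoutI.of (φ := φ) true).range ⊓
      (Monoid.PushoutI.of (φ := φ) false).range :=
    ⟨hsurj _, ⟨b, rfl⟩⟩
  rw [Monoid.PushoutI.inf_of_range_eq_base_range hφ (by simp : (true : Bool) ≠ false)] at hmem
  obtain ⟨c, hc⟩ := hmem
  refine ⟨c, Monoid.PushoutI.of_injective hφ false ?_⟩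
  rw [Monoid.PushoutI.of_apply_eq_base, hc]
end

section
/- Let A, B, C be groups with injective homomorphisms α: C → A and β: C → B. In the amalgamated free product A *_C B, the natural maps from A and from B into A *_C B are injective. -/
/-- the natural maps from `A = G true` and `B = G false` into the
amalgamated free product `A *_C B` (over injective `α = φ true`, `β = φ false`)
are injective. -/
theorem stmt1 {C : Type} [Group C] {G : Bool → Type} [∀ i, Group (G i)]
    (φ : ∀ i, C →* G i)
    (hα : Function.Injective (φ true)) (hβ : Function.Injective (φ false)) :
    Function.Injective (Monoid.PushoutI.of (φ := φ) true) ∧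
      Function.Injective (Monoid.PushoutI.of (φ := φ) false) := by
  have h : ∀ i, Function.Injective (φ i) := by
    intro i; cases i
    · exact hβ
    · exact hα
  exact ⟨Monoid.PushoutI.of_injective h true, Monoid.PushoutI.of_injective h false⟩
end

section
/- Let K be a compact attractor for a homeomorphism f of a locally compact, locally connected metric space, with basin A(K). Then K has finitely many connected components K₁, …, K_r, f permutes these components, and each component of K is invariant under f^{r!} and is an attractor for f^{r!} whose basin is the connected component of A(K) containing it. -/
open Filter Topology

/-- `K` is an attractor for the map `f` with basin of attraction `A`. -/
def IsAttractorWithBasin {X : Type*} [TopologicalSpace X] (f : X → X)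
    (K A : Set X) : Prop :=
  IsCompact K ∧ f '' K = K ∧
    (∀ V ∈ 𝓝ˢ K, ∃ W ∈ 𝓝ˢ K, ∀ n : ℕ, f^[n] '' W ⊆ V) ∧
    A ∈ 𝓝ˢ K ∧ A = {p | ∀ V ∈ 𝓝ˢ K, ∀ᶠ n in atTop, f^[n] p ∈ V}

open Set

set_option linter.unusedSectionVars false
set_option maxHeartbeats 1000000

section Basics

variable {X : Type*} [TopologicalSpace X] {g : X → X} {K A : Set X}

lemma iterate_image (hgK : g '' K = K) : ∀ n, g^[n] '' K = K
  | 0 => by simp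
  | (n + 1) => by
      rw [Function.iterate_succ, Set.image_comp, hgK, iterate_image hgK n]

lemma mem_basin_iterate
    (hA : A = {p | ∀ V ∈ 𝓝ˢ K, ∀ᶠ n in atTop, g^[n] p ∈ V}) (m : ℕ) {p : X} :
    p ∈ A ↔ g^[m] p ∈ A := by
  subst hA
  simp only [Set.mem_setOf_eq]
  constructor
  · intro hp V hV
    obtain ⟨a, ha⟩ := eventually_atTop.mp (hp V hV)
    refine eventually_atTop.mpr ⟨a, fun n hn => ?_⟩
    rw [← Function.iterate_add_apply]
    exact ha _ (by omega)
  · intro hp V hV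
    obtain ⟨a, ha⟩ := eventually_atTop.mp (hp V hV)
    refine eventually_atTop.mpr ⟨a + m, fun n hn => ?_⟩
    have h1 : g^[n - m] (g^[m] p) ∈ V := ha _ (by omega)
    rwa [← Function.iterate_add_apply, Nat.sub_add_cancel (by omega)] at h1

lemma basin_isOpen (hg : Continuous g) (hmem : A ∈ 𝓝ˢ K)
    (hA : A = {p | ∀ V ∈ 𝓝ˢ K, ∀ᶠ n in atTop, g^[n] p ∈ V}) : IsOpen A := by
  obtain ⟨U, hUo, hKU, hUA⟩ := mem_nhdsSet_iff_exists.mp hmem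
  rw [isOpen_iff_forall_mem_open]
  intro p hp
  have hp' := hp
  rw [hA] at hp'
  obtain ⟨N, hN⟩ := (hp' U (hUo.mem_nhdsSet.mpr hKU)).exists
  exact ⟨g^[N] ⁻¹' U, fun q hq => (mem_basin_iterate hA N).mpr (hUA hq),
    hUo.preimage (hg.iterate _), hN⟩

lemma uniform_attract (hg : Continuous g) (h : IsAttractorWithBasin g K A)
    {C : Set X} (hC : IsCompact C) (hCA : C ⊆ A) {V : Set X} (hV : V ∈ 𝓝ˢ K) :
    ∃ n₀, ∀ n ≥ n₀, ∀ c ∈ C, g^[n] c ∈ V := by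
  obtain ⟨-, -, hstab, -, hbasin⟩ := h
  obtain ⟨W, hW, hWV⟩ := hstab V hV
  obtain ⟨U, hUo, hKU, hUW⟩ := mem_nhdsSet_iff_exists.mp hW
  have hpt : ∀ c ∈ C, ∃ m, g^[m] c ∈ U := by
    intro c hc
    have hcA : c ∈ A := hCA hc
    rw [hbasin] at hcA
    exact (hcA U (hUo.mem_nhdsSet.mpr hKU)).exists
  choose! m hm using hpt
  have hnbhd : ∀ c ∈ C, g^[m c] ⁻¹' U ∈ 𝓝 c := fun c hc =>
    (hUo.preimage (hg.iterate _)).mem_nhds (hm c hc)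
  obtain ⟨t, htC, hcov⟩ := hC.elim_nhds_subcover _ hnbhd
  refine ⟨t.sup m, fun n hn c hc => ?_⟩
  obtain ⟨y, hyt, hy⟩ := Set.mem_iUnion₂.mp (hcov hc)
  have h1 : m y ≤ n := le_trans (Finset.le_sup hyt) hn
  have h2 : g^[n] c = g^[n - m y] (g^[m y] c) := by
    rw [← Function.iterate_add_apply, Nat.sub_add_cancel h1]
  rw [h2]
  exact hWV _ (Set.mem_image_of_mem _ (hUW hy))

end Basics
section Basics2
set_option linter.unusedSectionVars false
variable {X : Type*} [TopologicalSpace X]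

lemma image_basin (f : X ≃ₜ X) {K A : Set X}
    (hA : A = {p | ∀ V ∈ 𝓝ˢ K, ∀ᶠ n in atTop, (⇑f)^[n] p ∈ V}) : ⇑f '' A = A := by
  ext z
  constructor
  · rintro ⟨p, hp, rfl⟩
    have h1 := (mem_basin_iterate hA 1).mp hp
    simpa using h1
  · intro hz
    refine ⟨f.symm z, ?_, f.apply_symm_apply z⟩
    apply (mem_basin_iterate hA 1).mpr
    simpa using hz

end Basics2

section Components
set_option linter.unusedSectionVars false

variable {X : Type*} [TopologicalSpace X] [LocallyConnectedSpace X]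

lemma compl_component_open {A : Set X} (hA : IsOpen A) {x : X} :
    IsOpen (A \ connectedComponentIn A x) := by
  rw [isOpen_iff_forall_mem_open]
  rintro z ⟨hzA, hzC⟩
  refine ⟨connectedComponentIn A z, fun w hw => ⟨connectedComponentIn_subset _ _ hw, ?_⟩,
    hA.connectedComponentIn, mem_connectedComponentIn hzA⟩
  intro hwC
  apply hzC
  rw [connectedComponentIn_eq hwC, ← connectedComponentIn_eq hw]
  exact mem_connectedComponentIn hzA

lemma image_iterate_connectedComponentIn (f : X ≃ₜ X) {A : Set X} (hfA : ⇑f '' A = A)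
    {x : X} (hx : x ∈ A) :
    ∀ n, (⇑f)^[n] '' connectedComponentIn A x = connectedComponentIn A ((⇑f)^[n] x)
  | 0 => by simp
  | (n + 1) => by
      have hmem : (⇑f)^[n] x ∈ A := by
        rw [← iterate_image hfA n]
        exact Set.mem_image_of_mem _ hx
      rw [Function.iterate_succ_apply', Function.iterate_succ', Set.image_comp,
        image_iterate_connectedComponentIn f hfA hx n,
        f.image_connectedComponentIn hmem, hfA]

end Components

section Derived

variable {X : Type*} [TopologicalSpace X] [T2Space X] [LocallyConnectedSpace X]

lemma derived (f : X ≃ₜ X) {K A : Set X} (h : IsAttractorWithBasin (⇑f) K A)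
    {x : X} (hx : x ∈ A) {t : ℕ} (ht : 1 ≤ t)
    (hinv : (⇑f)^[t] '' connectedComponentIn A x = connectedComponentIn A x) :
    IsAttractorWithBasin ((⇑f)^[t]) (K ∩ connectedComponentIn A x)
      (connectedComponentIn A x) := by
  obtain ⟨hKcpt, hfK, hstab, hAK, hAbasin⟩ := h
  set A₀ := connectedComponentIn A x with hA₀def
  have hKA : K ⊆ A := subset_of_mem_nhdsSet hAK
  have hAopen : IsOpen A := basin_isOpen f.continuous hAK hAbasin
  have hA₀open : IsOpen A₀ := hAopen.connectedComponentIn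
  have hdiff : IsOpen (A \ A₀) := compl_component_open hAopen
  have hittn : ∀ n, (⇑f)^[t * n] '' A₀ = A₀ := by
    intro n
    rw [Function.iterate_mul]
    exact iterate_image hinv n
  have hVt : ∀ {V : Set X}, V ∈ 𝓝ˢ (K ∩ A₀) → (V ∩ A₀) ∪ (A \ A₀) ∈ 𝓝ˢ K := by
    intro V hV
    rw [mem_nhdsSet_iff_forall]
    intro k hk
    by_cases hkA₀ : k ∈ A₀
    · have h1 : V ∈ 𝓝 k := mem_nhdsSet_iff_forall.mp hV k ⟨hk, hkA₀⟩
      exact Filter.mem_of_superset (Filter.inter_mem h1 (hA₀open.mem_nhds hkA₀))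
        Set.subset_union_left
    · exact Filter.mem_of_superset (hdiff.mem_nhds ⟨hKA hk, hkA₀⟩) Set.subset_union_right
  have hVtsub : ∀ {V : Set X}, (((V ∩ A₀) ∪ (A \ A₀)) ∩ A₀) ⊆ V := by
    rintro V z ⟨hz1 | hz2, hzA₀⟩
    · exact hz1.1
    · exact absurd hzA₀ hz2.2
  refine ⟨?_, ?_, ?_, ?_, ?_⟩
  · have heq : K ∩ A₀ = K \ (A \ A₀) := by
      ext z
      constructor
      · rintro ⟨hzK, hzA₀⟩
        exact ⟨hzK, fun hz => hz.2 hzA₀⟩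
      · rintro ⟨hzK, hz⟩
        by_cases hzA₀ : z ∈ A₀
        · exact ⟨hzK, hzA₀⟩
        · exact absurd ⟨hKA hzK, hzA₀⟩ hz
    rw [heq]
    exact hKcpt.diff hdiff
  · rw [Set.image_inter (f.injective.iterate t), iterate_image hfK t, hinv]
  · intro V hV
    obtain ⟨W, hW, hWV⟩ := hstab _ (hVt hV)
    refine ⟨W ∩ A₀, ?_, ?_⟩
    · rw [mem_nhdsSet_iff_forall]
      rintro k ⟨hkK, hkA₀⟩
      exact Filter.inter_mem (mem_nhdsSet_iff_forall.mp hW k hkK) (hA₀open.mem_nhds hkA₀)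
    · intro n
      rw [← Function.iterate_mul]
      refine Set.Subset.trans ?_ hVtsub
      refine Set.Subset.trans (Set.image_inter_subset _ _ _) ?_
      exact Set.inter_subset_inter (hWV (t * n)) (le_of_eq (hittn n))
  · exact hA₀open.mem_nhdsSet.mpr Set.inter_subset_right
  · ext p
    simp only [Set.mem_setOf_eq]
    constructor
    · intro hp V hV
      have hpA : p ∈ A := connectedComponentIn_subset _ _ hp
      rw [hAbasin] at hpA
      obtain ⟨a, ha⟩ := eventually_atTop.mp (hpA _ (hVt hV))
      refine eventually_atTop.mpr ⟨a, fun n hn => ?_⟩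
      rw [← Function.iterate_mul]
      refine hVtsub ⟨ha (t * n) (le_trans hn (Nat.le_mul_of_pos_left n ht)), ?_⟩
      rw [← hittn n]
      exact Set.mem_image_of_mem _ hp
    · intro hp
      have hA₀nhds : A₀ ∈ 𝓝ˢ (K ∩ A₀) := hA₀open.mem_nhdsSet.mpr Set.inter_subset_right
      obtain ⟨n, hn⟩ := (hp A₀ hA₀nhds).exists
      rw [← Function.iterate_mul] at hn
      have hpA : p ∈ A := (mem_basin_iterate hAbasin (t * n)).mpr
        (connectedComponentIn_subset _ _ hn)
      have hfA : ⇑f '' A = A := image_basin f hAbasin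
      have himg : (⇑f)^[t * n] '' connectedComponentIn A p = (⇑f)^[t * n] '' A₀ := by
        rw [image_iterate_connectedComponentIn f hfA hpA (t * n), hittn n]
        exact (connectedComponentIn_eq hn).symm
      have hcomp_eq : connectedComponentIn A p = A₀ :=
        ((f.injective.iterate (t * n)).image_injective) himg
      rw [← hcomp_eq]
      exact mem_connectedComponentIn hpA

end Derived

section Topo
set_option linter.unusedSectionVars false

variable {X : Type*} [TopologicalSpace X] [T2Space X]

lemma escape {Q : ℕ → Set X} (hdec : ∀ k, Q (k + 1) ⊆ Q k)
    (hcpt : ∀ k, IsCompact (Q k)) {O : Set X} (hO : IsOpen O)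
    (hsub : (⋂ k, Q k) ⊆ O) : ∃ k, Q k ⊆ O := by
  by_contra hc
  push_neg at hc
  have hne : ∀ k, (Q k ∩ Oᶜ).Nonempty := by
    intro k
    obtain ⟨z, hz, hzO⟩ := Set.not_subset.mp (hc k)
    exact ⟨z, hz, hzO⟩
  have hmain := IsCompact.nonempty_iInter_of_sequence_nonempty_isCompact_isClosed
    (fun k => Q k ∩ Oᶜ) (fun k => Set.inter_subset_inter_left _ (hdec k)) hne
    ((hcpt 0).inter_right hO.isClosed_compl)
    (fun k => ((hcpt k).isClosed).inter hO.isClosed_compl)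
  obtain ⟨z, hz⟩ := hmain
  simp only [Set.mem_iInter, Set.mem_inter_iff] at hz
  exact (hz 0).2 (hsub (Set.mem_iInter.mpr fun k => (hz k).1))

lemma isPreconnected_iInter_nested {Q : ℕ → Set X} (hdec : ∀ k, Q (k + 1) ⊆ Q k)
    (hcpt : ∀ k, IsCompact (Q k)) (hconn : ∀ k, IsPreconnected (Q k)) :
    IsPreconnected (⋂ k, Q k) := by
  rintro u v hu hv hcov ⟨a, haI, hau⟩ ⟨b, hbI, hbv⟩
  by_contra hemp
  rw [Set.not_nonempty_iff_eq_empty] at hemp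
  set I := ⋂ k, Q k with hI
  have hIclosed : IsClosed I := isClosed_iInter fun k => (hcpt k).isClosed
  have hIcpt : IsCompact I := (hcpt 0).of_isClosed_subset hIclosed (Set.iInter_subset _ 0)
  set B := I \ v with hBdef
  set C := I \ u with hCdef
  have hBclosed : IsClosed B := hIclosed.sdiff hv
  have hCclosed : IsClosed C := hIclosed.sdiff hu
  have hBcpt : IsCompact B := hIcpt.of_isClosed_subset hBclosed Set.diff_subset
  have hCcpt : IsCompact C := hIcpt.of_isClosed_subset hCclosed Set.diff_subset
  have hanb : a ∉ v := by
    intro hav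
    have : a ∈ I ∩ (u ∩ v) := ⟨haI, hau, hav⟩
    rw [hemp] at this
    exact this
  have hbnu : b ∉ u := by
    intro hbu
    have : b ∈ I ∩ (u ∩ v) := ⟨hbI, hbu, hbv⟩
    rw [hemp] at this
    exact this
  have hdisjBC : Disjoint B C := by
    rw [Set.disjoint_left]
    rintro z ⟨hzI, hzv⟩ ⟨-, hzu⟩
    rcases hcov hzI with hz | hz
    exacts [hzu hz, hzv hz]
  obtain ⟨u', v', hu', hv', hBu', hCv', hdisj⟩ :=
    SeparatedNhds.of_isCompact_isCompact_isClosed hBcpt hCcpt hCclosed hdisjBC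
  have hIsub : I ⊆ u' ∪ v' := by
    intro z hz
    by_cases hzv : z ∈ v
    · by_cases hzu : z ∈ u
      · exfalso
        have : z ∈ I ∩ (u ∩ v) := ⟨hz, hzu, hzv⟩
        rw [hemp] at this
        exact this
      · exact Or.inr (hCv' ⟨hz, hzu⟩)
    · exact Or.inl (hBu' ⟨hz, hzv⟩)
  obtain ⟨k, hk⟩ := escape hdec hcpt (hu'.union hv') hIsub
  obtain ⟨w, -, hwu', hwv'⟩ := hconn k u' v' hu' hv' hk
    ⟨a, Set.mem_iInter.mp haI k, hBu' ⟨haI, hanb⟩⟩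
    ⟨b, Set.mem_iInter.mp hbI k, hCv' ⟨hbI, hbnu⟩⟩
  exact Set.disjoint_left.mp hdisj hwu' hwv'

variable [LocallyCompactSpace X] [LocallyConnectedSpace X]

lemma loc_nbhd {U : Set X} (hU : IsOpen U) {y : X} (hy : y ∈ U) :
    ∃ V, IsOpen V ∧ y ∈ V ∧ IsCompact (closure V) ∧ IsPreconnected (closure V) ∧
      closure V ⊆ U := by
  obtain ⟨M, hMcpt, hyM, hMU⟩ := exists_compact_subset hU hy
  obtain ⟨V, hVsub, hVo, hyV, hVconn⟩ :=
    locallyConnectedSpace_iff_subsets_isOpen_isConnected.mp ‹_› y (interior M)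
      (isOpen_interior.mem_nhds hyM)
  have hclM : closure V ⊆ M := by
    calc closure V ⊆ closure (interior M) := closure_mono hVsub
    _ ⊆ closure M := closure_mono interior_subset
    _ = M := hMcpt.isClosed.closure_eq
  exact ⟨V, hVo, hyV, hMcpt.of_isClosed_subset isClosed_closure hclM,
    hVconn.isPreconnected.closure, hclM.trans hMU⟩

lemma exists_compact_preconnected_nbhd {U C : Set X} (hU : IsOpen U)
    (hUconn : IsPreconnected U) (hC : IsCompact C) (hCU : C ⊆ U) (hCne : C.Nonempty) :
    ∃ D, IsCompact D ∧ IsPreconnected D ∧ C ⊆ interior D ∧ D ⊆ U := by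
  obtain ⟨x₀, hx₀⟩ := hCne
  set G := {y | y ∈ U ∧ ∃ S : Set X, IsCompact S ∧ IsPreconnected S ∧ S ⊆ U ∧
      x₀ ∈ S ∧ y ∈ S} with hGdef
  have hx₀U : x₀ ∈ U := hCU hx₀
  have hx₀G : x₀ ∈ G :=
    ⟨hx₀U, {x₀}, isCompact_singleton, isPreconnected_singleton,
      Set.singleton_subset_iff.mpr hx₀U, rfl, rfl⟩
  have hGopen : IsOpen G := by
    rw [isOpen_iff_forall_mem_open]
    rintro y ⟨hyU, S, hScpt, hSconn, hSU, hx₀S, hyS⟩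
    obtain ⟨V, hVo, hyV, hVcpt, hVconn, hVU⟩ := loc_nbhd hU hyU
    refine ⟨V, fun z hz => ⟨hVU (subset_closure hz), S ∪ closure V, hScpt.union hVcpt,
      hSconn.union y hyS (subset_closure hyV) hVconn,
      Set.union_subset hSU hVU, Or.inl hx₀S, Or.inr (subset_closure hz)⟩, hVo, hyV⟩
  have hG'open : IsOpen (U \ G) := by
    rw [isOpen_iff_forall_mem_open]
    rintro y ⟨hyU, hyG⟩
    obtain ⟨V, hVo, hyV, hVcpt, hVconn, hVU⟩ := loc_nbhd hU hyU
    refine ⟨V, fun z hz => ⟨hVU (subset_closure hz), fun hzG => ?_⟩, hVo, hyV⟩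
    obtain ⟨-, S, hScpt, hSconn, hSU, hx₀S, hzS⟩ := hzG
    exact hyG ⟨hyU, S ∪ closure V, hScpt.union hVcpt,
      hSconn.union z hzS (subset_closure hz) hVconn,
      Set.union_subset hSU hVU, Or.inl hx₀S, Or.inr (subset_closure hyV)⟩
  have hUG : U ⊆ G := by
    by_contra hc
    obtain ⟨y, hyU, hyG⟩ := Set.not_subset.mp hc
    obtain ⟨w, -, hwG, hwUG⟩ := hUconn G (U \ G) hGopen hG'open
      (fun z hz => (em (z ∈ G)).imp id fun h => ⟨hz, h⟩)
      ⟨x₀, hx₀U, hx₀G⟩ ⟨y, hyU, hyU, hyG⟩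
    exact hwUG.2 hwG
  have hloc : ∀ y ∈ C, ∃ V, IsOpen V ∧ y ∈ V ∧ IsCompact (closure V) ∧
      IsPreconnected (closure V) ∧ closure V ⊆ U := fun y hy => loc_nbhd hU (hCU hy)
  choose! V hVo hyV hVcpt hVconn hVU using hloc
  obtain ⟨t, htC, hcov⟩ := hC.elim_nhds_subcover V fun y hy => (hVo y hy).mem_nhds (hyV y hy)
  have hsel : ∀ y ∈ C, ∃ S : Set X, IsCompact S ∧ IsPreconnected S ∧ S ⊆ U ∧
      x₀ ∈ S ∧ y ∈ S := fun y hy => (hUG (hCU hy)).2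
  choose! S hScpt hSconn hSU hx₀S hyS using hsel
  refine ⟨⋃ y ∈ t, (closure (V y) ∪ S y), ?_, ?_, ?_, ?_⟩
  · exact t.finite_toSet.isCompact_biUnion fun y hy =>
      (hVcpt y (htC y hy)).union (hScpt y (htC y hy))
  · have hrw : (⋃ y ∈ t, (closure (V y) ∪ S y)) =
        ⋃₀ ((fun y => closure (V y) ∪ S y) '' ↑t) := by rw [Set.sUnion_image]; rfl
    rw [hrw]
    refine isPreconnected_sUnion x₀ _ ?_ ?_
    · rintro s ⟨y, hy, rfl⟩
      exact Or.inr (hx₀S y (htC y hy))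
    · rintro s ⟨y, hy, rfl⟩
      exact ((hVconn y (htC y hy)).union y (subset_closure (hyV y (htC y hy)))
        (hyS y (htC y hy)) (hSconn y (htC y hy)))
  · refine Set.Subset.trans hcov (interior_maximal ?_ (isOpen_biUnion fun y hy => hVo y (htC y hy)))
    exact Set.iUnion₂_mono fun y hy => Set.Subset.trans subset_closure Set.subset_union_left
  · exact Set.iUnion₂_subset fun y hy =>
      Set.union_subset (hVU y (htC y hy)) (hSU y (htC y hy))

end Topo
section Conn
set_option linter.unusedSectionVars false

variable {X : Type*} [TopologicalSpace X] [T2Space X] [LocallyCompactSpace X]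
  [LocallyConnectedSpace X]

lemma attractor_preconnected {g : X → X} (hg : Continuous g) {K₀ A₀ : Set X}
    (h : IsAttractorWithBasin g K₀ A₀) (hne : K₀.Nonempty)
    (hA₀open : IsOpen A₀) (hA₀conn : IsPreconnected A₀) : IsPreconnected K₀ := by
  have hKA : K₀ ⊆ A₀ := subset_of_mem_nhdsSet h.2.2.2.1
  have hKcpt : IsCompact K₀ := h.1
  obtain ⟨D, hDcpt, hDconn, hKint, hDA⟩ :=
    exists_compact_preconnected_nbhd hA₀open hA₀conn hKcpt hKA hne
  have hKD : K₀ ⊆ D := hKint.trans interior_subset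
  obtain ⟨n₁, hn₁⟩ := uniform_attract hg h hDcpt hDA
    (isOpen_interior.mem_nhdsSet.mpr hKint)
  set n₀ := n₁ + 1 with hn₀def
  set Q : ℕ → Set X := fun k => g^[n₀ * k] '' D with hQdef
  have hgD : g^[n₀] '' D ⊆ D := by
    rintro z ⟨d, hd, rfl⟩
    exact interior_subset (hn₁ n₀ (by omega) d hd)
  have hQdec : ∀ k, Q (k + 1) ⊆ Q k := by
    intro k
    show g^[n₀ * (k + 1)] '' D ⊆ g^[n₀ * k] '' D
    have : n₀ * (k + 1) = n₀ * k + n₀ := by ring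
    rw [this, Function.iterate_add, Set.image_comp]
    exact Set.image_mono hgD
  have hQcpt : ∀ k, IsCompact (Q k) := fun k => hDcpt.image (hg.iterate _)
  have hQconn : ∀ k, IsPreconnected (Q k) := fun k =>
    hDconn.image _ (hg.iterate _).continuousOn
  have hKQ : ∀ k, K₀ ⊆ Q k := by
    intro k
    rw [hQdef]
    calc K₀ = g^[n₀ * k] '' K₀ := (iterate_image h.2.1 _).symm
    _ ⊆ g^[n₀ * k] '' D := Set.image_mono hKD
  have hQK : (⋂ k, Q k) = K₀ := by
    refine Set.Subset.antisymm ?_ (Set.subset_iInter hKQ)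
    intro z hz
    by_contra hzK
    have hO : ({z}ᶜ : Set X) ∈ 𝓝ˢ K₀ :=
      (isOpen_compl_singleton).mem_nhdsSet.mpr fun w hw => fun hwz => hzK (hwz ▸ hw)
    obtain ⟨n₂, hn₂⟩ := uniform_attract hg h hDcpt hDA hO
    have hzQ : z ∈ Q n₂ := Set.mem_iInter.mp hz n₂
    obtain ⟨d, hd, hdz⟩ := hzQ
    exact (hn₂ (n₀ * n₂) (by nlinarith) d hd) hdz
  rw [← hQK]
  exact isPreconnected_iInter_nested hQdec hQcpt hQconn

end Conn

/-- a compact attractor `K` of a homeomorphism `f` of a locally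
compact, locally connected metric space has finitely many connected components,
`f` permutes these components, and (with `r` the number of components) each
component is invariant under `f^(r!)` and is an attractor for `f^(r!)` whose
basin is the connected component of `A` containing it. -/
theorem stmt14 {X : Type} [MetricSpace X] [LocallyCompactSpace X]
    [LocallyConnectedSpace X] (f : X ≃ₜ X) (K A : Set X)
    (h : IsAttractorWithBasin (⇑f) K A) :
    Finite (ConnectedComponents ↥K) ∧
    (∀ x ∈ K, ⇑f '' connectedComponentIn K x = connectedComponentIn K (f x)) ∧
    (∀ r : ℕ, r = Nat.card (ConnectedComponents ↥K) → ∀ x ∈ K,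
      (⇑f)^[r.factorial] '' connectedComponentIn K x = connectedComponentIn K x ∧
      IsAttractorWithBasin ((⇑f)^[r.factorial]) (connectedComponentIn K x)
        (connectedComponentIn A x)) := by
  obtain ⟨hKcpt, hfK, hstab, hAK, hAbasin⟩ := h
  have h' : IsAttractorWithBasin (⇑f) K A := ⟨hKcpt, hfK, hstab, hAK, hAbasin⟩
  have hKA : K ⊆ A := subset_of_mem_nhdsSet hAK
  have hAopen : IsOpen A := basin_isOpen f.continuous hAK hAbasin
  have hfA : ⇑f '' A = A := image_basin f hAbasin
  have hKiter : ∀ (n : ℕ) {z : X}, z ∈ K → (⇑f)^[n] z ∈ K := by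
    intro n z hz
    rw [← iterate_image hfK n]
    exact Set.mem_image_of_mem _ hz
  obtain ⟨T, hTK, hTcov⟩ := hKcpt.elim_nhds_subcover (fun y => connectedComponentIn A y)
    (fun y hy => hAopen.connectedComponentIn.mem_nhds (mem_connectedComponentIn (hKA hy)))
  have hpigeon : ∀ x ∈ K, ∃ t, 1 ≤ t ∧
      (⇑f)^[t] '' connectedComponentIn A x = connectedComponentIn A x := by
    intro x hx
    have hsel : ∀ n : ℕ, ∃ y, y ∈ T ∧ (⇑f)^[n] x ∈ connectedComponentIn A y := by
      intro n
      have h1 := hTcov (hKiter n hx)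
      rw [Set.mem_iUnion₂] at h1
      obtain ⟨y, hyT, hmem⟩ := h1
      exact ⟨y, hyT, hmem⟩
    choose y hyT hy using hsel
    obtain ⟨m, n, hmn, heq⟩ := Finite.exists_ne_map_eq_of_infinite
      (fun k => (⟨y k, hyT k⟩ : {z // z ∈ T}))
    have heqv : y m = y n := congrArg Subtype.val heq
    have key : ∀ m n : ℕ, m < n → y m = y n →
        ∃ t, 1 ≤ t ∧ (⇑f)^[t] '' connectedComponentIn A x = connectedComponentIn A x := by
      intro m n hlt hyeq
      have hcompeq : connectedComponentIn A ((⇑f)^[m] x)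
          = connectedComponentIn A ((⇑f)^[n] x) := by
        rw [← connectedComponentIn_eq (hy m), hyeq, connectedComponentIn_eq (hy n)]
      refine ⟨n - m, by omega, ?_⟩
      have him : ∀ k : ℕ, (⇑f)^[k] '' connectedComponentIn A x
          = connectedComponentIn A ((⇑f)^[k] x) :=
        image_iterate_connectedComponentIn f hfA (hKA hx)
      have h2 : (⇑f)^[m] '' ((⇑f)^[n - m] '' connectedComponentIn A x)
          = (⇑f)^[m] '' connectedComponentIn A x := by
        rw [← Set.image_comp, ← Function.iterate_add]
        have hmn' : m + (n - m) = n := by omega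
        rw [hmn', him n, him m]
        exact hcompeq.symm
      exact (f.injective.iterate m).image_injective h2
    rcases Nat.lt_or_ge m n with hlt | hge
    · exact key m n hlt heqv
    · exact key n m (by omega) heqv.symm
  have hconnKA : ∀ x ∈ K, IsPreconnected (K ∩ connectedComponentIn A x) := by
    intro x hx
    obtain ⟨t, ht1, hinv⟩ := hpigeon x hx
    have hder := derived f h' (hKA hx) ht1 hinv
    exact attractor_preconnected (f.continuous.iterate t) hder
      ⟨x, hx, mem_connectedComponentIn (hKA hx)⟩ hAopen.connectedComponentIn
      isPreconnected_connectedComponentIn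
  have hcomp : ∀ x ∈ K, connectedComponentIn K x = K ∩ connectedComponentIn A x := by
    intro x hx
    refine Set.Subset.antisymm
      (Set.subset_inter (connectedComponentIn_subset _ _) (connectedComponentIn_mono x hKA))
      ((hconnKA x hx).subset_connectedComponentIn
        ⟨hx, mem_connectedComponentIn (hKA hx)⟩ Set.inter_subset_left)
  have hmkeq : ∀ a b : ↥K, ((ConnectedComponents.mk a = ConnectedComponents.mk b) ↔
      connectedComponentIn K (a : X) = connectedComponentIn K (b : X)) := by
    intro a b
    constructor
    · intro hcc
      have hcc' : connectedComponent a = connectedComponent b :=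
        ConnectedComponents.coe_eq_coe.mp hcc
      rw [connectedComponentIn_eq_image a.2, connectedComponentIn_eq_image b.2, hcc']
    · intro hcc
      apply ConnectedComponents.coe_eq_coe.mpr
      have hbmem : (b : X) ∈ connectedComponentIn K (a : X) := by
        rw [hcc]
        exact mem_connectedComponentIn b.2
      rw [connectedComponentIn_eq_image a.2] at hbmem
      obtain ⟨b', hb', hbb⟩ := hbmem
      have hb'b : b' = b := Subtype.ext hbb
      subst hb'b
      exact connectedComponent_eq hb'
  have hfin : Finite (ConnectedComponents ↥K) := by
    set SS : Set (Set X) := (fun y => connectedComponentIn K y) '' ↑T with hSSdef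
    have hSfin : SS.Finite := T.finite_toSet.image _
    have hSsub : ∀ a : ↥K, connectedComponentIn K (a : X) ∈ SS := by
      intro a
      have h1 := hTcov a.2
      rw [Set.mem_iUnion₂] at h1
      obtain ⟨y, hyT, hmem⟩ := h1
      refine ⟨y, hyT, ?_⟩
      have h2 : connectedComponentIn A y = connectedComponentIn A (a : X) :=
        connectedComponentIn_eq hmem
      show connectedComponentIn K y = connectedComponentIn K (a : X)
      rw [hcomp y (hTK y hyT), hcomp (a : X) a.2, h2]
    let ψ : ConnectedComponents ↥K → Set X := fun c =>
      Quotient.liftOn' c (fun a : ↥K => connectedComponentIn K (a : X))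
        (fun a b hab => (hmkeq a b).mp (Quotient.sound' hab))
    have hinj : Function.Injective ψ := by
      intro c c'
      obtain ⟨a, rfl⟩ := ConnectedComponents.surjective_coe c
      obtain ⟨b, rfl⟩ := ConnectedComponents.surjective_coe c'
      intro hcc
      exact (hmkeq a b).mpr hcc
    have := hSfin.to_subtype
    refine Finite.of_injective (fun c : ConnectedComponents ↥K =>
      (⟨ψ c, ?_⟩ : ↥SS)) ?_
    · obtain ⟨a, rfl⟩ := ConnectedComponents.surjective_coe c
      exact hSsub a
    · intro c c' hcc
      exact hinj (congrArg Subtype.val hcc)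
  have hpart2 : ∀ x ∈ K, ⇑f '' connectedComponentIn K x = connectedComponentIn K (f x) := by
    intro x hx
    rw [f.image_connectedComponentIn hx, hfK]
  refine ⟨hfin, hpart2, ?_⟩
  intro r hr x hx
  have hfmem : ∀ a : ↥K, f (a : X) ∈ K := fun a => by
    have h1 : f (a : X) ∈ ⇑f '' K := Set.mem_image_of_mem _ a.2
    rwa [hfK] at h1
  have hsymmK : ⇑f.symm '' K = K := by
    have h1 : ⇑f.symm '' (⇑f '' K) = K := by
      rw [← Set.image_comp]
      simp
    rw [hfK] at h1
    exact h1
  have hsymmmem : ∀ a : ↥K, f.symm (a : X) ∈ K := fun a => by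
    have h1 : f.symm (a : X) ∈ ⇑f.symm '' K := Set.mem_image_of_mem _ a.2
    rwa [hsymmK] at h1
  have hpart2symm : ∀ a : ↥K,
      ⇑f.symm '' connectedComponentIn K (a : X) = connectedComponentIn K (f.symm a) :=
    fun a => by rw [f.symm.image_connectedComponentIn a.2, hsymmK]
  let σf : ConnectedComponents ↥K → ConnectedComponents ↥K := fun c =>
    Quotient.liftOn' c (fun a : ↥K => ConnectedComponents.mk (⟨f (a : X), hfmem a⟩ : ↥K))
      (fun a b hab => by
        apply (hmkeq _ _).mpr
        show connectedComponentIn K (f (a : X)) = connectedComponentIn K (f (b : X))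
        rw [← hpart2 _ a.2, ← hpart2 _ b.2, (hmkeq a b).mp (Quotient.sound' hab)])
  let σg : ConnectedComponents ↥K → ConnectedComponents ↥K := fun c =>
    Quotient.liftOn' c (fun a : ↥K => ConnectedComponents.mk (⟨f.symm (a : X), hsymmmem a⟩ : ↥K))
      (fun a b hab => by
        apply (hmkeq _ _).mpr
        show connectedComponentIn K (f.symm (a : X)) = connectedComponentIn K (f.symm (b : X))
        rw [← hpart2symm a, ← hpart2symm b, (hmkeq a b).mp (Quotient.sound' hab)])
  have hleft : ∀ c, σg (σf c) = c := by
    intro c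
    obtain ⟨a, rfl⟩ := ConnectedComponents.surjective_coe c
    show ConnectedComponents.mk ⟨f.symm (f (a : X)), _⟩ = ConnectedComponents.mk a
    congr 1
    exact Subtype.ext (f.symm_apply_apply _)
  have hright : ∀ c, σf (σg c) = c := by
    intro c
    obtain ⟨a, rfl⟩ := ConnectedComponents.surjective_coe c
    show ConnectedComponents.mk ⟨f (f.symm (a : X)), _⟩ = ConnectedComponents.mk a
    congr 1
    exact Subtype.ext (f.apply_symm_apply _)
  let σ : Equiv.Perm (ConnectedComponents ↥K) := ⟨σf, σg, hleft, hright⟩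
  have hσpow : ∀ (n : ℕ) (a : ↥K), (σ ^ n) (ConnectedComponents.mk a) =
      ConnectedComponents.mk (⟨(⇑f)^[n] (a : X), hKiter n a.2⟩ : ↥K) := by
    intro n
    induction n with
    | zero =>
        intro a
        rw [pow_zero]
        rfl
    | succ n ih =>
        intro a
        rw [pow_succ, Equiv.Perm.mul_apply]
        have h1 : σ (ConnectedComponents.mk a)
            = ConnectedComponents.mk (⟨f (a : X), hfmem a⟩ : ↥K) := rfl
        rw [h1, ih ⟨f (a : X), hfmem a⟩]
        congr 1
  have hσfact : σ ^ r.factorial = 1 := by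
    letI : Fintype (ConnectedComponents ↥K) := Fintype.ofFinite _
    letI : DecidableEq (ConnectedComponents ↥K) := Classical.decEq _
    have hcard : r = Fintype.card (ConnectedComponents ↥K) := by
      rw [hr, Nat.card_eq_fintype_card]
    have h1 : σ ^ (Fintype.card (ConnectedComponents ↥K)).factorial = 1 := by
      have h2 := pow_card_eq_one (G := Equiv.Perm (ConnectedComponents ↥K)) (x := σ)
      rwa [Fintype.card_perm] at h2
    rw [hcard]
    exact h1
  have hfixcomp : connectedComponentIn K ((⇑f)^[r.factorial] x) = connectedComponentIn K x := by
    have h1 := hσpow r.factorial ⟨x, hx⟩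
    rw [hσfact] at h1
    have h2 := (hmkeq (⟨x, hx⟩ : ↥K)
      ⟨(⇑f)^[r.factorial] x, hKiter r.factorial hx⟩).mp (by simpa using h1)
    exact h2.symm
  have hfxmem : (⇑f)^[r.factorial] x ∈ connectedComponentIn K x := by
    rw [← hfixcomp]
    exact mem_connectedComponentIn (hKiter _ hx)
  constructor
  · rw [image_iterate_connectedComponentIn f hfK hx r.factorial, hfixcomp]
  · have hAinv : (⇑f)^[r.factorial] '' connectedComponentIn A x = connectedComponentIn A x := by
      rw [image_iterate_connectedComponentIn f hfA (hKA hx) r.factorial]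
      have h3 : (⇑f)^[r.factorial] x ∈ connectedComponentIn A x :=
        connectedComponentIn_mono x hKA hfxmem
      exact (connectedComponentIn_eq h3).symm
    have hder := derived f h' (hKA hx) r.factorial_pos hAinv
    rw [hcomp x hx]
    exact hder
end
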